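/- Under the hypotheses of the previous integral identity, if f satisfies |f(s)| ≤ C(|s| + |A s^{1−ν}| + |B s^ν|)^n on the path L(x), then ∫_{L(x)} |f(s)|/|s| |ds| ≤ (C·P/(n·min(ν*, 1−ν*))) (|x| + |A x^{1−ν}| + |B x^ν|)^n. -/

import Mathlib

open MeasureTheory

/-- If `f` satisfies `|f(s)| ≤ C(|s| + |A s^{1−ν}| + |B s^ν|)^n` on the spiral path `L(x)`
(parametrized by `ρ = |s| ∈ (0, |x|]`, with the continuous branch of the logarithm along the
path), then `∫_{L(x)} |f(s)|/|s| |ds| ≤ (C·P/(n·min(ν*,1−ν*))) (|x| + |A x^{1−ν}| + |B x^ν|)^n`,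
where `P = √(1 + ((Re ν − ν*)/Im ν)²)` and `|ds| = P dρ`. -/
theorem stmt_7 (ν : ℂ) (hν : ν.im ≠ 0) (A B : ℂ) (νs : ℝ) (hνs0 : 0 < νs) (hνs1 : νs < 1)
    (r : ℝ) (hr : 0 < r) (argx : ℝ) (f : ℝ → ℂ) (C : ℝ) (hC : 0 < C) (n : ℕ) (hn : 1 ≤ n)
    (hf : ∀ ρ ∈ Set.Ioc (0 : ℝ) r,
      ‖f ρ‖ ≤ C * (ρ +
        ‖A * Complex.exp ((1 - ν) *
          (Real.log ρ + (argx + (ν.re - νs) / ν.im * Real.log (ρ / r)) * Complex.I))‖ +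
        ‖B * Complex.exp (ν *
          (Real.log ρ + (argx + (ν.re - νs) / ν.im * Real.log (ρ / r)) * Complex.I))‖) ^ n) :
    (∫⁻ ρ in Set.Ioc (0 : ℝ) r,
        ENNReal.ofReal (‖f ρ‖ / ρ * Real.sqrt (1 + ((ν.re - νs) / ν.im) ^ 2)))
      ≤ ENNReal.ofReal
          (C * Real.sqrt (1 + ((ν.re - νs) / ν.im) ^ 2) / (n * min νs (1 - νs)) *
            (r + ‖A * Complex.exp ((1 - ν) * (Real.log r + argx * Complex.I))‖ +
              ‖B * Complex.exp (ν * (Real.log r + argx * Complex.I))‖) ^ n) := by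
  set k : ℝ := (ν.re - νs) / ν.im with hk
  have hkc : ((ν.re : ℂ) - (νs : ℂ)) / (ν.im : ℂ) = ((k : ℝ) : ℂ) := by
    rw [hk]; push_cast; ring
  simp only [hkc] at hf
  set P : ℝ := Real.sqrt (1 + k ^ 2) with hPdef
  have hP0 : 0 < P := Real.sqrt_pos.2 (by positivity)
  set μ : ℝ := min νs (1 - νs) with hμdef
  have hμ0 : 0 < μ := lt_min hνs0 (by linarith)
  have hμ1 : μ ≤ 1 := le_trans (min_le_left _ _) (le_of_lt hνs1)
  set a : ℝ := ‖A * Complex.exp ((1 - ν) * (Real.log r + argx * Complex.I))‖ with hadef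
  set b : ℝ := ‖B * Complex.exp (ν * (Real.log r + argx * Complex.I))‖ with hbdef
  set M : ℝ := r + a + b with hMdef
  have ha0 : 0 ≤ a := norm_nonneg _
  have hb0 : 0 ≤ b := norm_nonneg _
  have hM0 : 0 < M := by rw [hMdef]; positivity
  set p : ℝ := (n : ℝ) * μ with hpdef
  have hn0 : (0:ℝ) < (n:ℝ) := by exact_mod_cast hn
  have hp0 : 0 < p := mul_pos hn0 hμ0
  -- key scaling identity for the exponentials
  have key : ∀ (c w : ℂ) (ρ : ℝ), 0 < ρ →
      ‖w * Complex.exp (c * (Real.log ρ + (argx + k * Real.log (ρ / r)) * Complex.I))‖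
      = (ρ / r) ^ (c.re - c.im * k) *
          ‖w * Complex.exp (c * (Real.log r + argx * Complex.I))‖ := by
    intro c w ρ hρ
    simp only [norm_mul, Complex.norm_exp, Complex.mul_re, Complex.add_re,
      Complex.add_im, Complex.mul_im, Complex.ofReal_re, Complex.ofReal_im, Complex.I_re,
      Complex.I_im]
    rw [Real.rpow_def_of_pos (div_pos hρ hr), Real.log_div (ne_of_gt hρ) (ne_of_gt hr),
      mul_left_comm, ← Real.exp_add]
    congr 1
    ring
  have hσA : (1 - ν).re - (1 - ν).im * k = 1 - νs := by
    simp only [Complex.sub_re, Complex.one_re, Complex.sub_im, Complex.one_im, hk]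
    field_simp
    ring
  have hσB : ν.re - ν.im * k = νs := by
    rw [hk]; field_simp; ring
  -- pointwise bound
  have hpt : ∀ ρ ∈ Set.Ioc (0:ℝ) r,
      ‖f ρ‖ / ρ * P ≤ C * P * M ^ n / r ^ p * ρ ^ (p - 1) := by
    intro ρ hρmem
    obtain ⟨hρ0, hρr⟩ := hρmem
    have ht0 : 0 < ρ / r := div_pos hρ0 hr
    have ht1 : ρ / r ≤ 1 := (div_le_one hr).2 hρr
    have hA := key (1 - ν) A ρ hρ0
    have hB := key ν B ρ hρ0
    rw [hσA] at hA
    rw [hσB] at hB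
    have hle : ∀ σ : ℝ, μ ≤ σ → (ρ / r) ^ σ ≤ (ρ / r) ^ μ := fun σ hσ =>
      Real.rpow_le_rpow_of_exponent_ge ht0 ht1 hσ
    have h1 : (ρ / r) ^ (1 - νs) ≤ (ρ / r) ^ μ := hle _ (min_le_right _ _)
    have h2 : (ρ / r) ^ (νs) ≤ (ρ / r) ^ μ := hle _ (min_le_left _ _)
    have h3 : ρ ≤ (ρ / r) ^ μ * r := by
      have h4 : ρ / r ≤ (ρ / r) ^ μ := by
        have := hle 1 hμ1
        rwa [Real.rpow_one] at this
      have := mul_le_mul_of_nonneg_right h4 (le_of_lt hr)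
      rwa [div_mul_cancel₀ _ (ne_of_gt hr)] at this
    have hg : ρ + ‖A * Complex.exp ((1 - ν) *
          (Real.log ρ + (argx + k * Real.log (ρ / r)) * Complex.I))‖ +
        ‖B * Complex.exp (ν *
          (Real.log ρ + (argx + k * Real.log (ρ / r)) * Complex.I))‖
        ≤ (ρ / r) ^ μ * M := by
      rw [hA, hB, ← hadef, ← hbdef, hMdef]
      have e1 := mul_le_mul_of_nonneg_right h1 ha0
      have e2 := mul_le_mul_of_nonneg_right h2 hb0
      nlinarith [h3, e1, e2]
    have hfρ : ‖f ρ‖ ≤ C * ((ρ / r) ^ μ * M) ^ n := by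
      refine le_trans (hf ρ ⟨hρ0, hρr⟩) ?_
      exact mul_le_mul_of_nonneg_left (pow_le_pow_left₀ (by positivity) hg n) hC.le
    have step : ‖f ρ‖ / ρ * P ≤ C * ((ρ / r) ^ μ * M) ^ n / ρ * P := by
      gcongr
    refine le_trans step (le_of_eq ?_)
    rw [mul_pow, ← Real.rpow_natCast ((ρ / r) ^ μ) n, ← Real.rpow_mul (le_of_lt ht0),
      Real.div_rpow (le_of_lt hρ0) (le_of_lt hr)]
    have hμn : μ * (n : ℝ) = p := by rw [hpdef]; ring
    rw [hμn, Real.rpow_sub hρ0, Real.rpow_one]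
    have hrp : (0:ℝ) < r ^ p := Real.rpow_pos_of_pos hr p
    have hρp : (0:ℝ) < ρ ^ p := Real.rpow_pos_of_pos hρ0 p
    field_simp
  -- the comparison integrand is integrable and nonnegative
  have hint : IntegrableOn (fun ρ : ℝ => C * P * M ^ n / r ^ p * ρ ^ (p - 1))
      (Set.Ioc (0:ℝ) r) volume := by
    have h := (intervalIntegral.intervalIntegrable_rpow' (a := 0) (b := r)
      (show (-1:ℝ) < p - 1 by linarith)).1
    exact h.const_mul _
  calc (∫⁻ ρ in Set.Ioc (0:ℝ) r, ENNReal.ofReal (‖f ρ‖ / ρ * P))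
      ≤ ∫⁻ ρ in Set.Ioc (0:ℝ) r,
          ENNReal.ofReal (C * P * M ^ n / r ^ p * ρ ^ (p - 1)) := by
        refine setLIntegral_mono' measurableSet_Ioc fun ρ hρ => ?_
        exact ENNReal.ofReal_le_ofReal (hpt ρ hρ)
    _ = ENNReal.ofReal (∫ ρ in Set.Ioc (0:ℝ) r, C * P * M ^ n / r ^ p * ρ ^ (p - 1)) := by
        rw [← ofReal_integral_eq_lintegral_ofReal hint ?_]
        filter_upwards [ae_restrict_mem measurableSet_Ioc] with ρ hρ
        have := hρ.1
        positivity
    _ = ENNReal.ofReal (C * P * M ^ n / r ^ p * (r ^ p / p)) := by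
        congr 1
        rw [MeasureTheory.integral_const_mul, ← intervalIntegral.integral_of_le (le_of_lt hr),
          integral_rpow (Or.inl (by linarith))]
        rw [sub_add_cancel, Real.zero_rpow (ne_of_gt hp0), sub_zero]
    _ = ENNReal.ofReal (C * P / ((n : ℝ) * μ) * M ^ n) := by
        congr 1
        have hrp : (0:ℝ) < r ^ p := Real.rpow_pos_of_pos hr p
        rw [← hpdef]
        field_simp
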